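/- Let G be a graph and ≺ any linear order on V(G). For every r ∈ ℕ, the weak r-coloring number of the copy product cp(G) with respect to the extended order cp(≺) is at most twice the weak r-coloring number of G with respect to ≺: wcol_r(cp(G), cp(≺)) ≤ 2 · wcol_r(G, ≺). -/

import Mathlib

variable {V : Type*}

/-- `x` lies in the closed `r`-ball around `c` in `G`. -/
def inBall (G : SimpleGraph V) (c : V) (r : ℕ) (x : V) : Prop :=
  ∃ p : G.Walk c x, p.length ≤ r

/-- The set of vertices weakly `r`-reachable from `v` with respect to the
linear order `L`: endpoints of paths of length at most `r` from `v` on which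
the endpoint is the minimum vertex. -/
def wreach (G : SimpleGraph V) (L : LinearOrder V) (r : ℕ) (v : V) : Set V :=
  {u | ∃ p : G.Walk v u, p.IsPath ∧ p.length ≤ r ∧ ∀ x ∈ p.support, L.le u x}

/-- The weak `r`-coloring number of `G` with respect to the order `L`. -/
noncomputable def wcolOrd [Fintype V] (G : SimpleGraph V) (L : LinearOrder V) (r : ℕ) : ℕ :=
  Finset.univ.sup fun v => (wreach G L r v).ncard

/-- The copy product `cp(G)`: the disjoint union of `G` with a copy of itself,
where each vertex is joined to its copy and made a true twin of it.  The copy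
of `v` is `(v, false)` and the original is `(v, true)`. -/
def cpGraph (G : SimpleGraph V) : SimpleGraph (Lex (V × Bool)) where
  Adj p q := G.Adj (ofLex p).1 (ofLex q).1 ∨
    ((ofLex p).1 = (ofLex q).1 ∧ (ofLex p).2 ≠ (ofLex q).2)
  symm := by
    constructor
    intro p q h
    rcases h with h | ⟨h1, h2⟩
    · exact Or.inl h.symm
    · exact Or.inr ⟨h1.symm, Ne.symm h2⟩
  loopless := by
    constructor
    intro p h
    rcases h with h | ⟨_, h2⟩
    · exact G.loopless.irrefl _ h
    · exact h2 rfl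

instance [Fintype V] : Fintype (Lex (V × Bool)) := inferInstanceAs (Fintype (V × Bool))

/-- The order `cp(≺)` on the copy product, inserting each copy `(v,false)`
immediately before the original `(v,true)`. -/
def cpOrder (L : LinearOrder V) : LinearOrder (Lex (V × Bool)) :=
  letI := L
  inferInstance

lemma exists_proj {G : SimpleGraph V}
    (cpG : SimpleGraph (Lex (V × Bool)))
    (hAdj : ∀ a b, cpG.Adj a b ↔ (G.Adj (ofLex a).1 (ofLex b).1 ∨
      ((ofLex a).1 = (ofLex b).1 ∧ (ofLex a).2 ≠ (ofLex b).2)))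
    {a b : Lex (V × Bool)} (p : cpG.Walk a b) :
    ∃ q : G.Walk (ofLex a).1 (ofLex b).1, q.length ≤ p.length ∧
      ∀ x ∈ q.support, ∃ y ∈ p.support, (ofLex y).1 = x := by
  induction p with
  | nil => exact ⟨.nil, by simp, by simp⟩
  | @cons a c b h p ih =>
    obtain ⟨q, hl, hs⟩ := ih
    rcases (hAdj _ _).mp h with h | ⟨h1, h2⟩
    · refine ⟨.cons h q, by simpa using hl, ?_⟩
      intro x hx
      rw [SimpleGraph.Walk.support_cons] at hx
      rcases List.mem_cons.mp hx with hx | hx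
      · exact ⟨a, by simp, hx.symm⟩
      · obtain ⟨y, hy, hyx⟩ := hs x hx
        exact ⟨y, by simp [hy], hyx⟩
    · refine ⟨q.copy h1.symm rfl, by simpa using hl.trans (Nat.le_succ _), ?_⟩
      intro x hx
      rw [SimpleGraph.Walk.support_copy] at hx
      obtain ⟨y, hy, hyx⟩ := hs x hx
      exact ⟨y, by simp [hy], hyx⟩

/-- `wcol_r(cp(G), cp(≺)) ≤ 2 ⬝ wcol_r(G, ≺)`. -/
theorem wcol_cpGraph_le [Fintype V] (G : SimpleGraph V) (L : LinearOrder V) (r : ℕ) :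
    wcolOrd (cpGraph G) (cpOrder L) r ≤ 2 * wcolOrd G L r := by
  classical
  letI := L
  rw [wcolOrd]
  apply Finset.sup_le
  intro v _
  set W := wreach G L r (ofLex v).1 with hW
  have hWle : W.ncard ≤ wcolOrd G L r := by
    rw [wcolOrd]
    exact Finset.le_sup (f := fun w => (wreach G L r w).ncard) (Finset.mem_univ ((ofLex v).1))
  have hsub : wreach (cpGraph G) (cpOrder L) r v ⊆
      ((fun u => toLex (u, false)) '' W) ∪ ((fun u => toLex (u, true)) '' W) := by
    intro u hu
    obtain ⟨p, hp, hlen, hmin⟩ := hu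
    obtain ⟨q, hql, hqs⟩ := exists_proj (cpGraph G) (fun _ _ => Iff.rfl) p
    have hmem : (ofLex u).1 ∈ W := by
      refine ⟨q.bypass, q.bypass_isPath, (q.length_bypass_le.trans hql).trans hlen, ?_⟩
      intro x hx
      obtain ⟨y, hy, rfl⟩ := hqs x (q.support_bypass_subset hx)
      have h : toLex (ofLex u) ≤ toLex (ofLex y) := hmin y hy
      rcases (Prod.Lex.le_iff).mp h with h' | ⟨h1, _⟩
      · exact h'.le
      · exact h1.le
    rcases hb : (ofLex u).2 with _ | _
    · left; exact ⟨(ofLex u).1, hmem, by rw [← hb]; rfl⟩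
    · right; exact ⟨(ofLex u).1, hmem, by rw [← hb]; rfl⟩
  have hinj : ∀ b : Bool, Function.Injective (fun u : V => toLex (u, b)) := by
    intro b a c h
    simpa using congrArg (fun z => (ofLex z).1) h
  calc (wreach (cpGraph G) (cpOrder L) r v).ncard
      ≤ (((fun u => toLex (u, false)) '' W) ∪ ((fun u => toLex (u, true)) '' W)).ncard :=
        Set.ncard_le_ncard hsub (Set.toFinite _)
    _ ≤ ((fun u => toLex (u, false)) '' W).ncard + ((fun u => toLex (u, true)) '' W).ncard :=
        Set.ncard_union_le _ _
    _ = W.ncard + W.ncard := by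
        rw [Set.ncard_image_of_injective _ (hinj false), Set.ncard_image_of_injective _ (hinj true)]
    _ = 2 * W.ncard := (two_mul _).symm
    _ ≤ 2 * wcolOrd G L r := by omega
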